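/- Let M = (Q, Σ, δ, q0, F) and N = (P, Σ, μ, p0, F') be DFAs over the same alphabet that are k-similar (L(M) △ L(N) contains only words of length less than k). Let q1, q2 ∈ Q and let w1, w2 ∈ Σ* be words with δ(q0, w_i) = q_i and |w_i| = in-level_M(q_i) for i = 1, 2 (in particular both in-levels are finite). If q1 and q2 are not k-similar as states, then μ(p0, w1) and μ(p0, w2) are not k-similar as states of N. -/

import Mathlib

/-- The distance `d(L, L')` between two languages: the least `ℓ ∈ ℕ` such that
`L` and `L'` agree on all words of length at least `ℓ` (with `min ∅ = ∞`). -/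
noncomputable def langDist {α : Type} (L L' : Set (List α)) : ℕ∞ :=
  sInf {n : ℕ∞ | ∃ ℓ : ℕ, n = (ℓ : ℕ∞) ∧
    ∀ w : List α, ℓ ≤ w.length → (w ∈ L ↔ w ∈ L')}

/-- A deterministic finite automaton with a partial transition function. -/
structure PDFA (α σ : Type) where
  step : σ → α → Option σ
  start : σ
  accept : Set σ

namespace PDFA

variable {α σ : Type}

/-- Running the partial DFA from state `q` on the word `w`. -/
def evalFrom (M : PDFA α σ) (q : σ) (w : List α) : Option σ :=
  w.foldl (fun o a => o.bind fun r => M.step r a) (some q)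

/-- Running the partial DFA from the start state. -/
def eval (M : PDFA α σ) (w : List α) : Option σ :=
  M.evalFrom M.start w

/-- The right-language `L_M(q)` of the state `q`. -/
def rightLang (M : PDFA α σ) (q : σ) : Set (List α) :=
  {w | ∃ p ∈ M.accept, M.evalFrom q w = some p}

/-- The language recognised by the partial DFA. -/
def accepts (M : PDFA α σ) : Set (List α) :=
  {w | ∃ p ∈ M.accept, M.eval w = some p}

/-- The left-language `δ⁻¹(q)` of the state `q`: all words leading to `q`. -/
def leftLang (M : PDFA α σ) (q : σ) : Set (List α) :=
  {w | M.eval w = some q}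

/-- `in-level_M(q)`: the supremum of the lengths of words leading to `q`. -/
noncomputable def inLevel (M : PDFA α σ) (q : σ) : ℕ∞ :=
  ⨆ w ∈ M.leftLang q, (w.length : ℕ∞)

/-- A DFA is minimal if all states are reachable and have pairwise
distinct right-languages. -/
def IsMinimal (M : PDFA α σ) : Prop :=
  (∀ q : σ, ∃ w : List α, M.eval w = some q) ∧
  ∀ q p : σ, M.rightLang q = M.rightLang p → q = p

end PDFA

/-- The distance between a state of `M` and a state of `N`. -/
noncomputable def stateDist {α σ τ : Type} (M : PDFA α σ) (N : PDFA α τ)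
    (q : σ) (p : τ) : ℕ∞ :=
  langDist (M.rightLang q) (N.rightLang p)

/-- Two states `q` of `M` and `p` of `N` are `k`-similar if
`d(q, p) + min(k, in-level_M(q), in-level_N(p)) ≤ k`. -/
def kSimSt {α σ τ : Type} (M : PDFA α σ) (N : PDFA α τ) (k : ℕ) (q : σ) (p : τ) : Prop :=
  stateDist M N q p + min (k : ℕ∞) (min (M.inLevel q) (N.inLevel p)) ≤ (k : ℕ∞)

/-- Two DFAs are `k`-similar if their languages differ only on words of length `< k`. -/
def kSimDFA {α σ τ : Type} (M : PDFA α σ) (N : PDFA α τ) (k : ℕ) : Prop :=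
  ∀ w ∈ symmDiff M.accepts N.accepts, w.length < k

lemma enat_coe_min' (a b : ℕ) : ((min a b : ℕ) : ℕ∞) = min (a : ℕ∞) (b : ℕ∞) :=
  Monotone.map_min (fun _ _ h => ENat.coe_le_coe.mpr h)

lemma langDist_le' {α : Type} {L L' : Set (List α)} {ℓ : ℕ}
    (h : ∀ w : List α, ℓ ≤ w.length → (w ∈ L ↔ w ∈ L')) :
    langDist L L' ≤ (ℓ : ℕ∞) :=
  sInf_le ⟨ℓ, rfl, h⟩

lemma langDist_spec' {α : Type} {L L' : Set (List α)} {w : List α}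
    (h : langDist L L' ≤ (w.length : ℕ∞)) : w ∈ L ↔ w ∈ L' := by
  have h2 : langDist L L' < (w.length : ℕ∞) + 1 :=
    lt_of_le_of_lt h (by exact_mod_cast Nat.lt_succ_self w.length)
  rw [langDist, sInf_lt_iff] at h2
  obtain ⟨a, ⟨ℓ, rfl, hag⟩, hlt⟩ := h2
  have : ℓ < w.length + 1 := by exact_mod_cast hlt
  exact hag w (Nat.lt_succ_iff.mp this)

lemma eval_append' {α σ : Type} (M : PDFA α σ) {w : List α} {q : σ}
    (h : M.eval w = some q) (u : List α) :
    M.eval (w ++ u) = M.evalFrom q u := by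
  unfold PDFA.eval PDFA.evalFrom at *
  rw [List.foldl_append, h]

lemma mem_rightLang_iff' {α σ : Type} (M : PDFA α σ) {w : List α} {q : σ}
    (h : M.eval w = some q) (u : List α) :
    u ∈ M.rightLang q ↔ (w ++ u) ∈ M.accepts := by
  unfold PDFA.rightLang PDFA.accepts
  rw [Set.mem_setOf_eq, Set.mem_setOf_eq, eval_append' M h u]

lemma kSim_agree' {α σ τ : Type} {M : PDFA α σ} {N : PDFA α τ} {k : ℕ}
    (hMN : kSimDFA M N k) {w : List α} (hw : k ≤ w.length) :
    w ∈ M.accepts ↔ w ∈ N.accepts := by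
  by_contra hc
  have hmem : w ∈ symmDiff M.accepts N.accepts := by
    rw [Set.mem_symmDiff]; tauto
  exact absurd (hMN w hmem) (not_lt.mpr hw)

lemma length_le_inLevel' {α σ : Type} (M : PDFA α σ) {w : List α} {q : σ}
    (h : M.eval w = some q) : (w.length : ℕ∞) ≤ M.inLevel q :=
  le_iSup₂ (f := fun (w : List α) (_ : w ∈ M.leftLang q) => (w.length : ℕ∞)) w h

/-- If `M ∼_k N`, `q₁, q₂` are states of `M` reached by words `w₁, w₂` of maximal
length (`|wᵢ| = in-level_M(qᵢ)`), and `q₁ ≁_k q₂`, then the states reached in `N`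
by `w₁` and `w₂` are not `k`-similar either. -/
theorem not_kSimSt_of_not_kSimSt {α σ τ : Type} (M : PDFA α σ) (N : PDFA α τ) (k : ℕ)
    (hMN : kSimDFA M N k) (q1 q2 : σ) (w1 w2 : List α)
    (h1 : M.eval w1 = some q1) (h2 : M.eval w2 = some q2)
    (hl1 : (w1.length : ℕ∞) = M.inLevel q1) (hl2 : (w2.length : ℕ∞) = M.inLevel q2)
    (hq : ¬ kSimSt M M k q1 q2)
    (p1 p2 : τ) (hp1 : N.eval w1 = some p1) (hp2 : N.eval w2 = some p2) :
    ¬ kSimSt N N k p1 p2 := by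
  intro hp
  apply hq
  unfold kSimSt at hp ⊢
  have hN1 : (w1.length : ℕ∞) ≤ N.inLevel p1 := length_le_inLevel' N hp1
  have hN2 : (w2.length : ℕ∞) ≤ N.inLevel p2 := length_le_inLevel' N hp2
  set m' : ℕ := min k (min w1.length w2.length) with hm'
  have hm'cast : ((m' : ℕ) : ℕ∞) ≤ min (k : ℕ∞) (min (N.inLevel p1) (N.inLevel p2)) := by
    have : ((m' : ℕ) : ℕ∞) = min (k : ℕ∞) (min (w1.length : ℕ∞) (w2.length : ℕ∞)) := by
      rw [hm', enat_coe_min', enat_coe_min']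
    rw [this]
    exact min_le_min le_rfl (min_le_min hN1 hN2)
  have hdk : stateDist N N p1 p2 + (m' : ℕ∞) ≤ (k : ℕ∞) :=
    le_trans (add_le_add le_rfl hm'cast) hp
  have hfin : stateDist N N p1 p2 ≠ ⊤ := by
    intro h; rw [h] at hdk; simp at hdk
  obtain ⟨dn, hdn⟩ : ∃ dn : ℕ, (dn : ℕ∞) = stateDist N N p1 p2 := by
    lift stateDist N N p1 p2 to ℕ using hfin with dn hdn
    exact ⟨dn, rfl⟩
  have hdnk : dn + m' ≤ k := by
    rw [← hdn, ← ENat.coe_add] at hdk; exact ENat.coe_le_coe.mp hdk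
  set ℓ : ℕ := k - m' with hℓ
  have hm'k : m' ≤ k := min_le_left _ _
  have hdℓ : dn ≤ ℓ := Nat.le_sub_of_add_le hdnk
  have hm'w1 : m' ≤ w1.length := le_trans (min_le_right _ _) (min_le_left _ _)
  have hm'w2 : m' ≤ w2.length := le_trans (min_le_right _ _) (min_le_right _ _)
  have h1ℓ : k - w1.length ≤ ℓ := Nat.sub_le_sub_left hm'w1 k
  have h2ℓ : k - w2.length ≤ ℓ := Nat.sub_le_sub_left hm'w2 k
  have hcross1 : stateDist M N q1 p1 ≤ ((k - w1.length : ℕ) : ℕ∞) := by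
    apply langDist_le'
    intro u hu
    rw [mem_rightLang_iff' M h1 u, mem_rightLang_iff' N hp1 u]
    apply kSim_agree' hMN
    rw [List.length_append]; omega
  have hcross2 : stateDist M N q2 p2 ≤ ((k - w2.length : ℕ) : ℕ∞) := by
    apply langDist_le'
    intro u hu
    rw [mem_rightLang_iff' M h2 u, mem_rightLang_iff' N hp2 u]
    apply kSim_agree' hMN
    rw [List.length_append]; omega
  have hagree : ∀ u : List α, ℓ ≤ u.length →
      (u ∈ M.rightLang q1 ↔ u ∈ M.rightLang q2) := by
    intro u hu
    have hu' : ((ℓ : ℕ) : ℕ∞) ≤ (u.length : ℕ∞) := ENat.coe_le_coe.mpr hu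
    have e1 : u ∈ M.rightLang q1 ↔ u ∈ N.rightLang p1 :=
      langDist_spec' (le_trans (le_trans hcross1 (ENat.coe_le_coe.mpr h1ℓ)) hu')
    have e2 : u ∈ N.rightLang p1 ↔ u ∈ N.rightLang p2 :=
      langDist_spec' (show langDist (N.rightLang p1) (N.rightLang p2) ≤ _ by
        show stateDist N N p1 p2 ≤ _
        rw [← hdn]
        exact le_trans (ENat.coe_le_coe.mpr hdℓ) hu')
    have e3 : u ∈ M.rightLang q2 ↔ u ∈ N.rightLang p2 :=
      langDist_spec' (le_trans (le_trans hcross2 (ENat.coe_le_coe.mpr h2ℓ)) hu')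
    exact e1.trans (e2.trans e3.symm)
  have hfinal : stateDist M M q1 q2 ≤ (ℓ : ℕ∞) := langDist_le' hagree
  have hmin : min (k : ℕ∞) (min (M.inLevel q1) (M.inLevel q2)) = (m' : ℕ∞) := by
    rw [← hl1, ← hl2, hm', enat_coe_min', enat_coe_min']
  rw [hmin]
  calc stateDist M M q1 q2 + (m' : ℕ∞) ≤ (ℓ : ℕ∞) + (m' : ℕ∞) :=
        add_le_add hfinal le_rfl
    _ = ((ℓ + m' : ℕ) : ℕ∞) := (ENat.coe_add ℓ m').symm
    _ = (k : ℕ∞) := by congr 1; omega
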